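/- For even n = 2k with n ≥ 6, there is no schedule of a single round-robin tournament on n teams that simultaneously has guaranteed rest time k-2, games-played difference index 1, and rest difference index 1. -/

import Mathlib

/-- `f` lists the games of a single round-robin tournament on `n` teams:
positions `0, ..., N-1` are in bijection with the unordered pairs of distinct teams. -/
def isSchedule (n N : ℕ) (f : ℕ → Sym2 (Fin n)) : Prop :=
  (∀ i, i < N → ¬ (f i).IsDiag) ∧
  ∀ p : Sym2 (Fin n), ¬ p.IsDiag → ∃! i, i < N ∧ f i = p

/-- The schedule has guaranteed rest time at least `b`: any two games involving a
common team `t` are separated by at least `b` games not involving `t`. -/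
def hasRest (n N : ℕ) (f : ℕ → Sym2 (Fin n)) (b : ℕ) : Prop :=
  ∀ t : Fin n, ∀ i j, i < j → j < N → t ∈ f i → t ∈ f j →
    b ≤ ((Finset.Ioo i j).filter (fun l => t ∉ f l)).card

/-- Number of games played by team `t` in the first `m` games. -/
def played (n : ℕ) (f : ℕ → Sym2 (Fin n)) (t : Fin n) (m : ℕ) : ℕ :=
  ((Finset.range m).filter (fun i => t ∈ f i)).card

/-- The games-played difference index is at most `p`. -/
def gpLe (n N : ℕ) (f : ℕ → Sym2 (Fin n)) (p : ℕ) : Prop :=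
  ∀ m, m ≤ N → ∀ t1 t2 : Fin n, played n f t1 m ≤ played n f t2 m + p

/-- The rest of team `t` going into the game at position `i`: the number of games since
`t`'s previous game, where all teams play an imaginary game one slot before game `0`. -/
def rest (n : ℕ) (f : ℕ → Sym2 (Fin n)) (t : Fin n) (i : ℕ) : ℕ :=
  ((Finset.range i).filter (fun j => ∀ l, j ≤ l → l < i → t ∉ f l)).card

/-- The rest difference index is at most `d`. -/
def rdLe (n N : ℕ) (f : ℕ → Sym2 (Fin n)) (d : ℕ) : Prop :=
  ∀ i, i < N → ∀ t1 t2 : Fin n, t1 ∈ f i → t2 ∈ f i →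
    rest n f t1 i ≤ rest n f t2 i + d

open Finset

lemma levelcard {k : ℕ} {σ : Fin (2*k) → ℕ}
    (hfib : ∀ v, v < k → (univ.filter (fun t => σ t = v)).card = 2)
    (hlt : ∀ t, σ t < k) (s : ℕ) :
    (univ.filter (fun t => s ≤ σ t)).card = 2 * (k - s) := by
  have h := Finset.card_eq_sum_card_fiberwise
    (f := σ) (s := univ.filter (fun t => s ≤ σ t)) (t := Finset.Ico s k)
    (by intro x hx; simp only [mem_coe, mem_filter, mem_univ, true_and] at hx
        exact Finset.mem_Ico.mpr ⟨hx, hlt x⟩)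
  rw [h]
  have h2 : ∀ v ∈ Finset.Ico s k,
      ((univ.filter (fun t => s ≤ σ t)).filter (fun t => σ t = v)).card = 2 := by
    intro v hv
    rw [Finset.mem_Ico] at hv
    rw [Finset.filter_filter]
    have : (univ.filter (fun t => s ≤ σ t ∧ σ t = v)) = univ.filter (fun t => σ t = v) := by
      apply Finset.filter_congr
      intro t _
      constructor
      · exact fun h => h.2
      · intro h; exact ⟨h ▸ hv.1, h⟩
    rw [this]
    exact hfib v hv.2
  rw [Finset.sum_congr rfl h2, Finset.sum_const, Nat.card_Ico, smul_eq_mul]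
  omega

lemma core {k : ℕ} (σ τ : Fin (2*k) → ℕ) (π : Fin (2*k) → Fin (2*k))
    (hσfib : ∀ v, v < k → (univ.filter (fun t => σ t = v)).card = 2)
    (hσlt : ∀ t, σ t < k)
    (hτfib : ∀ v, v < k → (univ.filter (fun t => τ t = v)).card = 2)
    (hτlt : ∀ t, τ t < k)
    (hinv : ∀ t, π (π t) = t)
    (hne : ∀ t, π t ≠ t)
    (hadj : ∀ t, σ (π t) = σ t + 1 ∨ σ t = σ (π t) + 1)
    (hτπ : ∀ t, τ (π t) = τ t)
    (hub : ∀ t, σ t ≤ τ t + 1) :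
    ∀ t, τ t / 2 = σ t / 2 := by
  -- Step C: for even s, the level set {σ ≥ s} is π-invariant
  have hC : ∀ s, 2 ∣ s → ∀ t, s ≤ σ t → s ≤ σ (π t) := by
    intro s
    induction s using Nat.strong_induction_on with
    | _ s ih =>
      intro hs t ht
      rcases Nat.lt_or_ge s 2 with h2 | h2
      · interval_cases s
        · omega
        · omega
      -- s = s' + 2
      obtain ⟨s', rfl⟩ : ∃ s', s = s' + 2 := ⟨s - 2, by omega⟩
      have hs' : 2 ∣ s' := by omega
      have ihs' := ih s' (by omega) hs'
      -- level sets A (σ = s') and B (σ = s'+1)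
      set A := univ.filter (fun t => σ t = s') with hA
      set B := univ.filter (fun t => σ t = s' + 1) with hB
      have hAcard : A.card = 2 := hσfib s' (by have := hσlt t; omega)
      have hBcard : B.card = 2 := hσfib (s'+1) (by have := hσlt t; omega)
      have hπA : ∀ a ∈ A, π a ∈ B := by
        intro a ha
        rw [hA, mem_filter] at ha
        have h1 : s' ≤ σ (π a) := ihs' a (le_of_eq ha.2.symm)
        rw [hB, mem_filter]
        refine ⟨mem_univ _, ?_⟩
        rcases hadj a with h | h <;> omega
      have hAB : A.image π = B := by
        apply Finset.eq_of_subset_of_card_le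
        · intro b hb
          rw [Finset.mem_image] at hb
          obtain ⟨a, ha, rfl⟩ := hb
          exact hπA a ha
        · rw [hBcard, Finset.card_image_of_injOn, hAcard]
          intro x _ y _ hxy
          have := congrArg π hxy
          rwa [hinv, hinv] at this
      have hπB : ∀ b ∈ B, π b ∈ A := by
        intro b hb
        rw [← hAB, Finset.mem_image] at hb
        obtain ⟨a, ha, rfl⟩ := hb
        rwa [hinv]
      -- now conclude
      have h1 : s' ≤ σ (π t) := ihs' t (by omega)
      by_contra hcon
      have hπtB : π t ∈ B := by
        rw [hB, mem_filter]
        refine ⟨mem_univ _, ?_⟩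
        rcases hadj t with h | h <;> omega
      have := hπB _ hπtB
      rw [hinv] at this
      rw [hA, mem_filter] at this
      omega
  -- Step D: even σ gives partner above
  have hD : ∀ t, σ t % 2 = 0 → σ (π t) = σ t + 1 := by
    intro t ht
    have h1 := hC (σ t) (by omega) t le_rfl
    rcases hadj t with h | h <;> omega
  -- Step E: odd σ gives partner below
  have hE : ∀ t, σ t % 2 = 1 → σ t = σ (π t) + 1 := by
    intro t ht
    rcases hadj t with h | h
    · exfalso
      have h2 : σ (π t) % 2 = 0 := by omega
      have := hD (π t) h2
      rw [hinv] at this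
      omega
    · exact h
  -- min of pair = 2*(σ t / 2), and τ t ≥ it
  have hm : ∀ t, 2 * (σ t / 2) ≤ τ t := by
    intro t
    rcases Nat.even_or_odd (σ t) with h | h
    · have h0 : σ t % 2 = 0 := Nat.even_iff.mp h
      have ha := hD t h0
      have h2 := hub (π t)
      rw [hτπ] at h2
      omega
    · have h0 : σ t % 2 = 1 := Nat.odd_iff.mp h
      have ha := hE t h0
      have hb := hub t
      omega
  -- counting: for even s, {σ ≥ s} = {τ ≥ s}
  have hcount : ∀ s, 2 ∣ s → ∀ t, s ≤ τ t → s ≤ σ t := by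
    intro s hs t ht
    have hsub : univ.filter (fun t => s ≤ σ t) ⊆ univ.filter (fun t => s ≤ τ t) := by
      intro x hx
      rw [mem_filter] at hx ⊢
      refine ⟨mem_univ _, ?_⟩
      have := hm x
      omega
    have heq : univ.filter (fun t => s ≤ σ t) = univ.filter (fun t => s ≤ τ t) := by
      apply Finset.eq_of_subset_of_card_le hsub
      rw [levelcard hσfib hσlt, levelcard hτfib hτlt]
    have : t ∈ univ.filter (fun t => s ≤ τ t) := by
      rw [mem_filter]; exact ⟨mem_univ _, ht⟩
    rw [← heq, mem_filter] at this
    exact this.2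
  intro t
  have h1 := hm t
  by_contra hcon
  rcases Nat.lt_or_ge (τ t / 2) (σ t / 2) with h | h
  · omega
  · have h2 : σ t / 2 + 1 ≤ τ t / 2 := by omega
    have h3 : 2 * (σ t / 2) + 2 ≤ τ t := by omega
    have h4 := hcount (2 * (σ t / 2) + 2) (by omega) t h3
    omega

namespace RR

variable {k : ℕ} {f : ℕ → Sym2 (Fin (2*k))}

/-- each game has exactly two participants -/
lemma card2 (hS : isSchedule (2*k) (k*(2*k-1)) f) {i : ℕ} (hi : i < k*(2*k-1)) :
    (univ.filter (fun t => t ∈ f i)).card = 2 := by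
  obtain ⟨a, b, hab⟩ : ∃ a b, f i = s(a, b) := by
    induction (f i) using Sym2.ind with
    | _ x y => exact ⟨x, y, rfl⟩
  have hne : a ≠ b := by
    intro h
    exact hS.1 i hi (hab ▸ h ▸ Sym2.mk_isDiag_iff.mpr rfl)
  have : univ.filter (fun t => t ∈ f i) = {a, b} := by
    ext x
    simp [hab, Sym2.mem_iff]
  rw [this, Finset.card_insert_of_notMem (by simp [hne]), Finset.card_singleton]

lemma sum_played (hS : isSchedule (2*k) (k*(2*k-1)) f) {m : ℕ} (hm : m ≤ k*(2*k-1)) :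
    ∑ t : Fin (2*k), played (2*k) f t m = 2 * m := by
  have : ∑ t : Fin (2*k), played (2*k) f t m
      = ∑ i ∈ Finset.range m, (univ.filter (fun t => t ∈ f i)).card := by
    simp only [played, Finset.card_filter]
    rw [Finset.sum_comm]
  rw [this]
  rw [Finset.sum_congr rfl (fun i hi => card2 hS (lt_of_lt_of_le (Finset.mem_range.mp hi) hm))]
  rw [Finset.sum_const, Finset.card_range, smul_eq_mul, Nat.mul_comm]

lemma played_round (hk : 3 ≤ k) (hS : isSchedule (2*k) (k*(2*k-1)) f)
    (hG : gpLe (2*k) (k*(2*k-1)) f 1) {r : ℕ} (hr : r ≤ 2*k-1) (t : Fin (2*k)) :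
    played (2*k) f t (r*k) = r := by
  have hm : r * k ≤ k*(2*k-1) := by
    calc r * k ≤ (2*k-1) * k := Nat.mul_le_mul_right k hr
    _ = k*(2*k-1) := Nat.mul_comm _ _
  have hsum := sum_played hS hm
  by_contra hne
  have hcard : (univ : Finset (Fin (2*k))).card = 2*k := by simp
  have hsplit : ∑ u ∈ univ.erase t, played (2*k) f u (r*k) + played (2*k) f t (r*k)
      = ∑ u : Fin (2*k), played (2*k) f u (r*k) :=
    Finset.sum_erase_add univ (fun u => played (2*k) f u (r*k)) (Finset.mem_univ t)
  have hce : (univ.erase t).card = 2*k - 1 := by rw [Finset.card_erase_of_mem (Finset.mem_univ t), hcard]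
  have hrk : r ≤ 2*k*r := Nat.le_mul_of_pos_left r (by omega)
  have hkey : (2*k-1)*r + r = 2*(r*k) := by
    rw [Nat.sub_mul, one_mul, Nat.sub_add_cancel hrk]; ring
  rcases Nat.lt_or_ge (played (2*k) f t (r*k)) r with hlt | hge
  · have hall : ∀ u ∈ univ.erase t, played (2*k) f u (r*k) ≤ r := by
      intro u _
      have := hG (r*k) hm u t
      omega
    have hb : ∑ u ∈ univ.erase t, played (2*k) f u (r*k) ≤ (2*k-1)*r := by
      calc ∑ u ∈ univ.erase t, played (2*k) f u (r*k) ≤ ∑ _u ∈ univ.erase t, r :=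
            Finset.sum_le_sum hall
        _ = (2*k-1)*r := by rw [Finset.sum_const, hce, smul_eq_mul]
    omega
  · have hgt : r < played (2*k) f t (r*k) := by omega
    have hall : ∀ u ∈ univ.erase t, r ≤ played (2*k) f u (r*k) := by
      intro u _
      have := hG (r*k) hm t u
      omega
    have hb : (2*k-1)*r ≤ ∑ u ∈ univ.erase t, played (2*k) f u (r*k) := by
      calc (2*k-1)*r = ∑ _u ∈ univ.erase t, r := by rw [Finset.sum_const, hce, smul_eq_mul]
        _ ≤ ∑ u ∈ univ.erase t, played (2*k) f u (r*k) := Finset.sum_le_sum hall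
    omega
  
/-- each team plays exactly once per round -/
lemma round_once (hk : 3 ≤ k) (hS : isSchedule (2*k) (k*(2*k-1)) f)
    (hG : gpLe (2*k) (k*(2*k-1)) f 1) {r : ℕ} (hr : r < 2*k-1) (t : Fin (2*k)) :
    ((Finset.Ico (r*k) (r*k+k)).filter (fun i => t ∈ f i)).card = 1 := by
  have h1 := played_round hk hS hG (le_of_lt hr) t
  have h2 := played_round hk hS hG (show r+1 ≤ 2*k-1 from hr) t
  unfold played at h1 h2
  have hsplit : Finset.range ((r+1)*k) = Finset.range (r*k) ∪ Finset.Ico (r*k) (r*k+k) := by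
    rw [Finset.range_eq_Ico, Finset.range_eq_Ico, Finset.Ico_union_Ico_eq_Ico (Nat.zero_le _) (Nat.le_add_right _ _)]
    congr 1
    ring
  rw [hsplit, Finset.filter_union, Finset.card_union_of_disjoint] at h2
  · omega
  · apply Finset.disjoint_filter_filter
    rw [Finset.range_eq_Ico]
    exact Finset.Ico_disjoint_Ico_consecutive 0 (r*k) (r*k+k)


noncomputable def pos (k : ℕ) (f : ℕ → Sym2 (Fin (2*k))) (r : ℕ) (t : Fin (2*k)) : ℕ :=
  sInf {i | r*k ≤ i ∧ i < r*k + k ∧ t ∈ f i}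

lemma pos_spec (hk : 3 ≤ k) (hS : isSchedule (2*k) (k*(2*k-1)) f)
    (hG : gpLe (2*k) (k*(2*k-1)) f 1) {r : ℕ} (hr : r < 2*k-1) (t : Fin (2*k)) :
    r*k ≤ pos k f r t ∧ pos k f r t < r*k + k ∧ t ∈ f (pos k f r t) := by
  have h1 := round_once hk hS hG hr t
  obtain ⟨a, ha⟩ := Finset.card_eq_one.mp h1
  have haa : a ∈ (Finset.Ico (r*k) (r*k+k)).filter (fun i => t ∈ f i) := by
    rw [ha]; exact Finset.mem_singleton_self a
  rw [Finset.mem_filter, Finset.mem_Ico] at haa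
  have hne : {i | r*k ≤ i ∧ i < r*k + k ∧ t ∈ f i}.Nonempty :=
    ⟨a, haa.1.1, haa.1.2, haa.2⟩
  exact Nat.sInf_mem hne

lemma pos_eq (hk : 3 ≤ k) (hS : isSchedule (2*k) (k*(2*k-1)) f)
    (hG : gpLe (2*k) (k*(2*k-1)) f 1) {r : ℕ} (hr : r < 2*k-1) {t : Fin (2*k)} {i : ℕ}
    (hi1 : r*k ≤ i) (hi2 : i < r*k + k) (hmem : t ∈ f i) : pos k f r t = i := by
  have h1 := round_once hk hS hG hr t
  obtain ⟨a, ha⟩ := Finset.card_eq_one.mp h1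
  have hp := pos_spec hk hS hG hr t
  have h2 : pos k f r t ∈ (Finset.Ico (r*k) (r*k+k)).filter (fun i => t ∈ f i) := by
    rw [Finset.mem_filter, Finset.mem_Ico]; exact ⟨⟨hp.1, hp.2.1⟩, hp.2.2⟩
  have h3 : i ∈ (Finset.Ico (r*k) (r*k+k)).filter (fun i => t ∈ f i) := by
    rw [Finset.mem_filter, Finset.mem_Ico]; exact ⟨⟨hi1, hi2⟩, hmem⟩
  rw [ha, Finset.mem_singleton] at h2 h3
  rw [h2, h3]

lemma not_mem_round (hk : 3 ≤ k) (hS : isSchedule (2*k) (k*(2*k-1)) f)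
    (hG : gpLe (2*k) (k*(2*k-1)) f 1) {r : ℕ} (hr : r < 2*k-1) {t : Fin (2*k)} {l : ℕ}
    (hl1 : r*k ≤ l) (hl2 : l < r*k + k) (hne : l ≠ pos k f r t) : t ∉ f l :=
  fun hmem => hne ((pos_eq hk hS hG hr hl1 hl2 hmem).symm)

lemma not_mem_between (hk : 3 ≤ k) (hS : isSchedule (2*k) (k*(2*k-1)) f)
    (hG : gpLe (2*k) (k*(2*k-1)) f 1) {r : ℕ} (hr : r + 1 < 2*k-1) {t : Fin (2*k)} {l : ℕ}
    (hl1 : pos k f r t < l) (hl2 : l < pos k f (r+1) t) : t ∉ f l := by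
  have hr' : r < 2*k-1 := by omega
  have hp := pos_spec hk hS hG hr' t
  have hq := pos_spec hk hS hG hr t
  have he : (r+1)*k = r*k + k := by ring
  rcases Nat.lt_or_ge l (r*k + k) with h | h
  · exact not_mem_round hk hS hG hr' (by omega) h (by omega)
  · exact not_mem_round hk hS hG hr (by omega) (by omega) (by omega)

lemma pos_lt_next (hk : 3 ≤ k) (hS : isSchedule (2*k) (k*(2*k-1)) f)
    (hG : gpLe (2*k) (k*(2*k-1)) f 1) {r : ℕ} (hr : r + 1 < 2*k-1) (t : Fin (2*k)) :
    pos k f r t < pos k f (r+1) t := by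
  have hp := pos_spec hk hS hG (show r < 2*k-1 by omega) t
  have hq := pos_spec hk hS hG hr t
  have he : (r+1)*k = r*k + k := by ring
  omega

lemma rest_zero (hk : 3 ≤ k) (hS : isSchedule (2*k) (k*(2*k-1)) f)
    (hG : gpLe (2*k) (k*(2*k-1)) f 1) (t : Fin (2*k)) :
    rest (2*k) f t (pos k f 0 t) = pos k f 0 t := by
  have h0 : (0:ℕ) < 2*k-1 := by omega
  have hp := pos_spec hk hS hG h0 t
  unfold rest
  rw [Finset.filter_true_of_mem, Finset.card_range]
  intro j hj
  rw [Finset.mem_range] at hj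
  intro l hl1 hl2
  exact not_mem_round hk hS hG h0 (by omega) (by omega) (by omega)

lemma rest_succ (hk : 3 ≤ k) (hS : isSchedule (2*k) (k*(2*k-1)) f)
    (hG : gpLe (2*k) (k*(2*k-1)) f 1) {r : ℕ} (hr : r + 1 < 2*k-1) (t : Fin (2*k)) :
    rest (2*k) f t (pos k f (r+1) t) = pos k f (r+1) t - pos k f r t - 1 := by
  have hlt := pos_lt_next hk hS hG hr t
  have hp := pos_spec hk hS hG (show r < 2*k-1 by omega) t
  unfold rest
  have : (Finset.range (pos k f (r+1) t)).filter
      (fun j => ∀ l, j ≤ l → l < pos k f (r+1) t → t ∉ f l)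
      = Finset.Ico (pos k f r t + 1) (pos k f (r+1) t) := by
    ext j
    rw [Finset.mem_filter, Finset.mem_range, Finset.mem_Ico]
    constructor
    · rintro ⟨hj, hall⟩
      refine ⟨?_, hj⟩
      by_contra hcon
      exact hall (pos k f r t) (by omega) hlt hp.2.2
    · rintro ⟨hj1, hj2⟩
      exact ⟨hj2, fun l hl1 hl2 => not_mem_between hk hS hG hr (by omega) hl2⟩
  rw [this, Nat.card_Ico]
  omega

lemma ioo_card (hk : 3 ≤ k) (hS : isSchedule (2*k) (k*(2*k-1)) f)
    (hG : gpLe (2*k) (k*(2*k-1)) f 1) {r : ℕ} (hr : r + 1 < 2*k-1) (t : Fin (2*k)) :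
    ((Finset.Ioo (pos k f r t) (pos k f (r+1) t)).filter (fun l => t ∉ f l)).card
      = pos k f (r+1) t - pos k f r t - 1 := by
  rw [Finset.filter_true_of_mem, Nat.card_Ioo]
  intro l hl
  rw [Finset.mem_Ioo] at hl
  exact not_mem_between hk hS hG hr hl.1 hl.2

noncomputable def partner (k : ℕ) (f : ℕ → Sym2 (Fin (2*k))) (r : ℕ) (t : Fin (2*k)) :
    Fin (2*k) :=
  if h : t ∈ f (pos k f r t) then Sym2.Mem.other h else t

lemma pos_lt_N {r : ℕ} (hr : r < 2*k-1) {i : ℕ} (hi : i < r*k + k) : i < k*(2*k-1) := by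
  have : r*k + k ≤ (2*k-1)*k := by
    have : (r+1)*k ≤ (2*k-1)*k := Nat.mul_le_mul_right k (by omega)
    calc r*k + k = (r+1)*k := by ring
    _ ≤ (2*k-1)*k := this
  calc i < r*k+k := hi
  _ ≤ (2*k-1)*k := this
  _ = k*(2*k-1) := Nat.mul_comm _ _

lemma partner_mem (hk : 3 ≤ k) (hS : isSchedule (2*k) (k*(2*k-1)) f)
    (hG : gpLe (2*k) (k*(2*k-1)) f 1) {r : ℕ} (hr : r < 2*k-1) (t : Fin (2*k)) :
    partner k f r t ∈ f (pos k f r t) := by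
  have hp := pos_spec hk hS hG hr t
  unfold partner
  rw [dif_pos hp.2.2]
  exact Sym2.other_mem hp.2.2

lemma partner_ne (hk : 3 ≤ k) (hS : isSchedule (2*k) (k*(2*k-1)) f)
    (hG : gpLe (2*k) (k*(2*k-1)) f 1) {r : ℕ} (hr : r < 2*k-1) (t : Fin (2*k)) :
    partner k f r t ≠ t := by
  have hp := pos_spec hk hS hG hr t
  have hd : ¬ (f (pos k f r t)).IsDiag := hS.1 _ (pos_lt_N hr hp.2.1)
  unfold partner
  rw [dif_pos hp.2.2]
  exact Sym2.other_ne hd hp.2.2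

lemma pos_partner (hk : 3 ≤ k) (hS : isSchedule (2*k) (k*(2*k-1)) f)
    (hG : gpLe (2*k) (k*(2*k-1)) f 1) {r : ℕ} (hr : r < 2*k-1) (t : Fin (2*k)) :
    pos k f r (partner k f r t) = pos k f r t := by
  have hp := pos_spec hk hS hG hr t
  exact pos_eq hk hS hG hr hp.1 hp.2.1 (partner_mem hk hS hG hr t)

lemma partner_invol (hk : 3 ≤ k) (hS : isSchedule (2*k) (k*(2*k-1)) f)
    (hG : gpLe (2*k) (k*(2*k-1)) f 1) {r : ℕ} (hr : r < 2*k-1) (t : Fin (2*k)) :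
    partner k f r (partner k f r t) = t := by
  have hp := pos_spec hk hS hG hr t
  have h1 : t ∈ f (pos k f r t) := hp.2.2
  have hpp := pos_partner hk hS hG hr t
  conv_lhs => rw [partner, hpp]
  rw [show partner k f r t = Sym2.Mem.other h1 from by unfold partner; rw [dif_pos h1]]
  rw [dif_pos (Sym2.other_mem h1)]
  exact Sym2.other_invol h1 (Sym2.other_mem h1)


lemma gap (hk : 3 ≤ k) (hS : isSchedule (2*k) (k*(2*k-1)) f)
    (hG : gpLe (2*k) (k*(2*k-1)) f 1) (hR : hasRest (2*k) (k*(2*k-1)) f (k-2))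
    {r : ℕ} (hr : r + 1 < 2*k-1) (t : Fin (2*k)) :
    pos k f r t + (k-1) ≤ pos k f (r+1) t := by
  have hlt := pos_lt_next hk hS hG hr t
  have hp := pos_spec hk hS hG (show r < 2*k-1 by omega) t
  have hq := pos_spec hk hS hG hr t
  have hjN : pos k f (r+1) t < k*(2*k-1) := pos_lt_N hr hq.2.1
  have hcard := ioo_card hk hS hG hr t
  have h := hR t _ _ hlt hjN hp.2.2 hq.2.2
  rw [hcard] at h
  omega

lemma adj (hk : 3 ≤ k) (hS : isSchedule (2*k) (k*(2*k-1)) f)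
    (hG : gpLe (2*k) (k*(2*k-1)) f 1) (hD : rdLe (2*k) (k*(2*k-1)) f 1)
    {r : ℕ} (hr : r + 1 < 2*k-1) (t : Fin (2*k)) :
    pos k f r (partner k f (r+1) t) = pos k f r t + 1 ∨
    pos k f r t = pos k f r (partner k f (r+1) t) + 1 := by
  have hr' : r < 2*k-1 := by omega
  set u := partner k f (r+1) t with hu
  have hpu : pos k f (r+1) u = pos k f (r+1) t := pos_partner hk hS hG hr t
  have hrt := rest_succ hk hS hG hr t
  have hru := rest_succ hk hS hG hr u
  rw [hpu] at hru
  have hiN : pos k f (r+1) t < k*(2*k-1) := pos_lt_N hr (pos_spec hk hS hG hr t).2.1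
  have hmt : t ∈ f (pos k f (r+1) t) := (pos_spec hk hS hG hr t).2.2
  have hmu : u ∈ f (pos k f (r+1) t) := partner_mem hk hS hG hr t
  have h1 := hD _ hiN t u hmt hmu
  have h2 := hD _ hiN u t hmu hmt
  rw [hrt, hru] at h1 h2
  have hlt_t := pos_lt_next hk hS hG hr t
  have hlt_u : pos k f r u < pos k f (r+1) t := by
    have := pos_lt_next hk hS hG hr u
    omega
  have hne : pos k f r u ≠ pos k f r t := by
    intro heq
    have hut : u ≠ t := partner_ne hk hS hG hr t
    have hmt' : t ∈ f (pos k f r t) := (pos_spec hk hS hG hr' t).2.2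
    have hmu' : u ∈ f (pos k f r t) := heq ▸ (pos_spec hk hS hG hr' u).2.2
    have e1 : f (pos k f r t) = s(u, t) := (Sym2.mem_and_mem_iff hut).mp ⟨hmu', hmt'⟩
    have e2 : f (pos k f (r+1) t) = s(u, t) := (Sym2.mem_and_mem_iff hut).mp ⟨hmu, hmt⟩
    have hd : ¬ (s(u,t) : Sym2 (Fin (2*k))).IsDiag := by
      rw [Sym2.mk_isDiag_iff]; exact hut
    obtain ⟨i0, _, huniq⟩ := hS.2 _ hd
    have ha := huniq _ ⟨pos_lt_N hr' (pos_spec hk hS hG hr' t).2.1, e1⟩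
    have hb := huniq _ ⟨hiN, e2⟩
    omega
  omega

lemma pos_fiber (hk : 3 ≤ k) (hS : isSchedule (2*k) (k*(2*k-1)) f)
    (hG : gpLe (2*k) (k*(2*k-1)) f 1) {r : ℕ} (hr : r < 2*k-1) {v : ℕ} (hv : v < k) :
    (univ.filter (fun t => pos k f r t - r*k = v)).card = 2 := by
  have heq : univ.filter (fun t => pos k f r t - r*k = v)
      = univ.filter (fun t => t ∈ f (r*k+v)) := by
    ext t
    simp only [Finset.mem_filter, Finset.mem_univ, true_and]
    constructor
    · intro h
      have hp := pos_spec hk hS hG hr t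
      have hh : pos k f r t = r*k + v := by omega
      rw [← hh]; exact hp.2.2
    · intro h
      have := pos_eq hk hS hG hr (Nat.le_add_right _ _) (by omega) h
      omega
  rw [heq]
  exact card2 hS (pos_lt_N hr (by omega))

lemma block_invariant (hk : 3 ≤ k) (hS : isSchedule (2*k) (k*(2*k-1)) f)
    (hG : gpLe (2*k) (k*(2*k-1)) f 1) (hR : hasRest (2*k) (k*(2*k-1)) f (k-2))
    (hD : rdLe (2*k) (k*(2*k-1)) f 1) :
    ∀ r, r < 2*k-1 → ∀ t, (pos k f r t - r*k)/2 = pos k f 0 t / 2 := by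
  intro r
  induction r with
  | zero =>
    intro _ t
    rw [Nat.zero_mul, Nat.sub_zero]
  | succ r ih =>
    intro hr t
    have hr' : r < 2*k-1 := by omega
    have he : (r+1)*k = r*k + k := by ring
    have hcore := core (fun t => pos k f r t - r*k) (fun t => pos k f (r+1) t - (r+1)*k)
      (partner k f (r+1))
      (fun v hv => pos_fiber hk hS hG hr' hv)
      (fun t => by
        show pos k f r t - r*k < k
        have := pos_spec hk hS hG hr' t; omega)
      (fun v hv => pos_fiber hk hS hG hr hv)
      (fun t => by
        show pos k f (r+1) t - (r+1)*k < k
        have := pos_spec hk hS hG hr t; omega)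
      (fun t => partner_invol hk hS hG hr t)
      (fun t => partner_ne hk hS hG hr t)
      (fun t => by
        show pos k f r (partner k f (r+1) t) - r*k = pos k f r t - r*k + 1 ∨
          pos k f r t - r*k = pos k f r (partner k f (r+1) t) - r*k + 1
        have h := adj hk hS hG hD hr t
        have h1 := pos_spec hk hS hG hr' t
        have h2 := pos_spec hk hS hG hr' (partner k f (r+1) t)
        omega)
      (fun t => by
        show pos k f (r+1) (partner k f (r+1) t) - (r+1)*k = pos k f (r+1) t - (r+1)*k
        rw [pos_partner hk hS hG hr t])
      (fun t => by
        show pos k f r t - r*k ≤ pos k f (r+1) t - (r+1)*k + 1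
        have h := gap hk hS hG hR hr t
        have h1 := pos_spec hk hS hG hr' t
        have h2 := pos_spec hk hS hG hr t
        omega)
      t
    rw [hcore, ih hr' t]

end RR


/-- For even `n = 2k ≥ 6`, no schedule simultaneously has guaranteed rest time exactly
`k-2`, games-played difference index exactly `1`, and rest difference index exactly `1`. -/
theorem stmt6 (k : ℕ) (hk : 3 ≤ k) :
    ¬ ∃ f : ℕ → Sym2 (Fin (2*k)), isSchedule (2*k) (2*k*(2*k-1)/2) f ∧
      (hasRest (2*k) (2*k*(2*k-1)/2) f (k-2) ∧ ¬ hasRest (2*k) (2*k*(2*k-1)/2) f (k-1)) ∧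
      (gpLe (2*k) (2*k*(2*k-1)/2) f 1 ∧ ¬ gpLe (2*k) (2*k*(2*k-1)/2) f 0) ∧
      (rdLe (2*k) (2*k*(2*k-1)/2) f 1 ∧ ¬ rdLe (2*k) (2*k*(2*k-1)/2) f 0) := by
  rintro ⟨f, hS, ⟨hR, -⟩, ⟨hG, -⟩, ⟨hD, -⟩⟩
  have hN : 2*k*(2*k-1)/2 = k*(2*k-1) := by
    have h : 2*k*(2*k-1) = 2*(k*(2*k-1)) := by ring
    rw [h, Nat.mul_div_cancel_left _ (by norm_num)]
  rw [hN] at hS hR hG hD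
  have h35 : 3*(2*3-1) ≤ k*(2*k-1) := Nat.mul_le_mul hk (by omega)
  have h0N : (0:ℕ) < k*(2*k-1) := by omega
  have h2N : (2:ℕ) < k*(2*k-1) := by omega
  have h02k : (0:ℕ) < 2*k-1 := by omega
  obtain ⟨t0, ht0⟩ : ∃ t0 : Fin (2*k), t0 ∈ f 0 := by
    have hc := RR.card2 hS h0N
    obtain ⟨t0, ht0⟩ := Finset.card_pos.mp (by rw [hc]; norm_num)
    rw [Finset.mem_filter] at ht0
    exact ⟨t0, ht0.2⟩
  obtain ⟨u0, hu0⟩ : ∃ u0 : Fin (2*k), u0 ∈ f 2 := by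
    have hc := RR.card2 hS h2N
    obtain ⟨u0, hu0⟩ := Finset.card_pos.mp (by rw [hc]; norm_num)
    rw [Finset.mem_filter] at hu0
    exact ⟨u0, hu0.2⟩
  have hpt0 : RR.pos k f 0 t0 = 0 := RR.pos_eq hk hS hG h02k (by omega) (by omega) ht0
  have hpu0 : RR.pos k f 0 u0 = 2 := RR.pos_eq hk hS hG h02k (by omega) (by omega) hu0
  have hne : t0 ≠ u0 := by
    intro h
    rw [h] at hpt0
    omega
  have hd : ¬ (s(t0,u0) : Sym2 (Fin (2*k))).IsDiag := by
    rw [Sym2.mk_isDiag_iff]; exact hne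
  obtain ⟨i, ⟨hiN, hfi⟩, -⟩ := hS.2 _ hd
  have hk0 : 0 < k := by omega
  have hmod := Nat.div_add_mod i k
  have hmlt : i % k < k := Nat.mod_lt _ hk0
  have hcomm : (i/k) * k = k * (i/k) := Nat.mul_comm _ _
  have hrk_le : (i/k)*k ≤ i := by omega
  have hi_lt : i < (i/k)*k + k := by omega
  have hrlt : i/k < 2*k-1 := by
    by_contra h
    have h1 : (2*k-1) * k ≤ (i/k) * k := Nat.mul_le_mul_right _ (by omega)
    have h2 : k*(2*k-1) = (2*k-1)*k := Nat.mul_comm _ _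
    omega
  have hti : t0 ∈ f i := by rw [hfi]; exact Sym2.mem_mk_left _ _
  have hui : u0 ∈ f i := by rw [hfi]; exact Sym2.mem_mk_right _ _
  have e1 : RR.pos k f (i/k) t0 = i := RR.pos_eq hk hS hG hrlt hrk_le hi_lt hti
  have e2 : RR.pos k f (i/k) u0 = i := RR.pos_eq hk hS hG hrlt hrk_le hi_lt hui
  have b1 := RR.block_invariant hk hS hG hR hD (i/k) hrlt t0
  have b2 := RR.block_invariant hk hS hG hR hD (i/k) hrlt u0
  rw [e1, hpt0] at b1
  rw [e2, hpu0] at b2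
  omega
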